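/- For every τ ∈ ℝ, lim_{α→0⁺} ∫_{−∞}^{0} e^{λs} e^{−2αω(s)} (1 + h(s+τ)) ds = ∫_{−∞}^{0} e^{λs} (1 + h(s+τ)) ds. Consequently, the radii M_α(τ,ω) = c₀ (∫_{−∞}^{0} e^{λs} e^{−2αω(s)}(1 + h(s+τ)) ds)^{1/2} of the absorbing balls satisfy limsup_{α→0⁺} M_α(τ,ω) = M_0(τ) = c₀ (∫_{−∞}^{0} e^{λs}(1 + h(s+τ)) ds)^{1/2} for any fixed constant c₀ > 0. -/

import Mathlib

open Set MeasureTheory Filter Topology ENNReal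

/-- Sublinear growth: a continuous function with `ω s / s → 0` at `±∞` satisfies a
linear bound `|ω s| ≤ ε |s| + C`. -/
lemma omega_linear_bound (ω : ℝ → ℝ) (hω : Continuous ω)
    (hbot : Tendsto (fun s => ω s / s) atBot (𝓝 0))
    (htop : Tendsto (fun s => ω s / s) atTop (𝓝 0))
    {ε : ℝ} (hε : 0 < ε) : ∃ C : ℝ, 0 ≤ C ∧ ∀ s, |ω s| ≤ ε * |s| + C := by
  have h1 : ∀ᶠ s in atTop, |ω s / s| < ε := by
    have := htop.eventually (eventually_abs_sub_lt 0 hε)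
    simpa using this
  have h2 : ∀ᶠ s in atBot, |ω s / s| < ε := by
    have := hbot.eventually (eventually_abs_sub_lt 0 hε)
    simpa using this
  obtain ⟨A, hA⟩ := eventually_atTop.mp h1
  obtain ⟨B, hB⟩ := eventually_atBot.mp h2
  set A' := max A 1 with hA'
  set B' := min B (-1) with hB'
  obtain ⟨C₀, hC₀⟩ := (isCompact_Icc (a := B') (b := A')).exists_bound_of_continuousOn
    hω.continuousOn
  refine ⟨max C₀ 0, le_max_right _ _, fun s => ?_⟩
  rcases le_total s A' with hs | hs
  · rcases le_total B' s with hsB | hsB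
    · have := hC₀ s ⟨hsB, hs⟩
      rw [Real.norm_eq_abs] at this
      have h3 : 0 ≤ ε * |s| := mul_nonneg hε.le (abs_nonneg s)
      have := le_max_left C₀ 0
      linarith
    · have h2' := hB s (hsB.trans (min_le_left _ _))
      have hs1 : s ≤ -1 := hsB.trans (min_le_right _ _)
      have hsne : s ≠ 0 := by intro hc; rw [hc] at hs1; linarith
      rw [abs_div, div_lt_iff₀ (abs_pos.mpr hsne)] at h2'
      have := le_max_right C₀ 0
      nlinarith
  · have h1' := hA s (le_trans (le_max_left A 1) hs)
    have hs1 : 1 ≤ s := le_trans (le_max_right A 1) hs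
    have hsne : s ≠ 0 := by intro hc; rw [hc] at hs1; linarith
    rw [abs_div, div_lt_iff₀ (abs_pos.mpr hsne)] at h1'
    have := le_max_right C₀ 0
    nlinarith

/-- As the noise intensity `α → 0⁺`, the squared radii
`∫_{-∞}^{0} e^{λs} e^{-2αω(s)} (1 + h(s+τ))` ds of the absorbing balls converge to
`∫_{-∞}^{0} e^{λs} (1 + h(s+τ)) ds`; consequently
`limsup_{α→0⁺} M_α(τ,ω) = M_0(τ)` for the radii
`M_α(τ,ω) = c₀ (∫_{-∞}^{0} e^{λs} e^{-2αω(s)} (1 + h(s+τ)) ds)^{1/2}`. -/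
theorem absorbing_radius_convergence
    (lam δ : ℝ) (hlam : 0 < lam) (hδ0 : 0 ≤ δ) (hδ : δ < lam)
    (ω : ℝ → ℝ) (hω : Continuous ω)
    (hωbot : Tendsto (fun s => ω s / s) atBot (𝓝 0))
    (hωtop : Tendsto (fun s => ω s / s) atTop (𝓝 0))
    (h : ℝ → ℝ) (hmeas : Measurable h) (hpos : ∀ s, 0 ≤ h s)
    (hint : ∀ τ : ℝ, ∫⁻ s in Iic τ, ENNReal.ofReal (Real.exp (δ * s) * h s) < ⊤)
    (τ : ℝ) :
    Tendsto (fun α : ℝ =>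
        ∫⁻ s in Iic (0:ℝ),
          ENNReal.ofReal (Real.exp (lam * s) * Real.exp (-2 * α * ω s) * (1 + h (s + τ))))
      (𝓝[>] 0)
      (𝓝 (∫⁻ s in Iic (0:ℝ), ENNReal.ofReal (Real.exp (lam * s) * (1 + h (s + τ))))) ∧
    ∀ c₀ : ℝ, 0 < c₀ →
      Filter.limsup (fun α : ℝ => c₀ * Real.sqrt
          (∫⁻ s in Iic (0:ℝ),
            ENNReal.ofReal
              (Real.exp (lam * s) * Real.exp (-2 * α * ω s) * (1 + h (s + τ)))).toReal)
        (𝓝[>] (0:ℝ))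
      = c₀ * Real.sqrt
          (∫⁻ s in Iic (0:ℝ),
            ENNReal.ofReal (Real.exp (lam * s) * (1 + h (s + τ)))).toReal := by
  set ε := (lam - δ) / 4 with hεdef
  have hε : 0 < ε := by rw [hεdef]; linarith
  obtain ⟨C, hC0, hC⟩ := omega_linear_bound ω hω hωbot hωtop hε
  set c₁ := (lam + δ) / 2 with hc₁def
  have hδc₁ : δ ≤ c₁ := by rw [hc₁def]; linarith
  have hc₁lam : c₁ ≤ lam := by rw [hc₁def]; linarith
  have hc₁pos : 0 < c₁ := by rw [hc₁def]; linarith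
  -- measurability of `h (· + τ)`
  have hm1 : Measurable fun s : ℝ => h (s + τ) := hmeas.comp (measurable_add_const τ)
  -- the dominating function
  set bound : ℝ → ℝ≥0∞ := fun s =>
    ENNReal.ofReal (Real.exp (2 * C) * Real.exp (c₁ * s)) +
      ENNReal.ofReal (Real.exp (2 * C) * (Real.exp (δ * s) * h (s + τ))) with hbdef
  have hboundmeas : Measurable bound := by
    apply Measurable.fun_add
    · exact ENNReal.measurable_ofReal.comp
        ((measurable_const.mul (Real.measurable_exp.comp (measurable_const.mul measurable_id))))
    · exact ENNReal.measurable_ofReal.comp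
        (measurable_const.mul
          ((Real.measurable_exp.comp (measurable_const.mul measurable_id)).mul hm1))
  -- key exponential estimates
  have expkey : ∀ α ∈ Set.Ioc (0:ℝ) 1, ∀ s ≤ (0:ℝ),
      Real.exp (lam * s) * Real.exp (-2 * α * ω s) ≤ Real.exp (2 * C) * Real.exp (c₁ * s) := by
    intro α hα s hs0
    rw [← Real.exp_add, ← Real.exp_add]
    apply Real.exp_le_exp.mpr
    have hωs : -(ω s) ≤ ε * (-s) + C := by
      have h1 := hC s
      rw [abs_of_nonpos hs0] at h1
      exact (neg_le_abs (ω s)).trans h1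
    have b1 : -2 * α * ω s ≤ 2 * α * (ε * (-s) + C) := by
      have : (-2) * α * ω s = 2 * α * (-(ω s)) := by ring
      rw [this]
      exact mul_le_mul_of_nonneg_left hωs (by linarith [hα.1])
    have f1 : 0 ≤ (1 - α) * C := mul_nonneg (by linarith [hα.2]) hC0
    have f2 : 0 ≤ 2 * ε * (1 - α) * (-s) :=
      mul_nonneg (mul_nonneg (mul_nonneg (by norm_num) hε.le) (by linarith [hα.2]))
        (by linarith)
    nlinarith [hα.1, hα.2]
  have expkey2 : ∀ s ≤ (0:ℝ), Real.exp (c₁ * s) ≤ Real.exp (δ * s) := fun s hs0 =>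
    Real.exp_le_exp.mpr (mul_le_mul_of_nonpos_right hδc₁ hs0)
  -- pointwise domination
  have key : ∀ α ∈ Set.Ioc (0:ℝ) 1, ∀ s ∈ Iic (0:ℝ),
      ENNReal.ofReal (Real.exp (lam * s) * Real.exp (-2 * α * ω s) * (1 + h (s + τ)))
        ≤ bound s := by
    intro α hα s hs
    have hs0 : s ≤ 0 := hs
    have e1 := expkey α hα s hs0
    have e2 := expkey2 s hs0
    have hh := hpos (s + τ)
    have e3 : Real.exp (lam * s) * Real.exp (-2 * α * ω s) * (1 + h (s + τ)) ≤
        Real.exp (2 * C) * Real.exp (c₁ * s) * (1 + h (s + τ)) :=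
      mul_le_mul_of_nonneg_right e1 (by linarith)
    have e4 : Real.exp (2 * C) * Real.exp (c₁ * s) * h (s + τ) ≤
        Real.exp (2 * C) * Real.exp (δ * s) * h (s + τ) :=
      mul_le_mul_of_nonneg_right
        (mul_le_mul_of_nonneg_left e2 (Real.exp_nonneg _)) hh
    calc ENNReal.ofReal (Real.exp (lam * s) * Real.exp (-2 * α * ω s) * (1 + h (s + τ)))
        ≤ ENNReal.ofReal (Real.exp (2 * C) * Real.exp (c₁ * s) +
            Real.exp (2 * C) * (Real.exp (δ * s) * h (s + τ))) := by
          apply ENNReal.ofReal_le_ofReal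
          nlinarith
      _ = bound s := by
          rw [hbdef]
          exact ENNReal.ofReal_add (by positivity)
            (mul_nonneg (Real.exp_nonneg _) (mul_nonneg (Real.exp_nonneg _) hh))
  -- limit integrand is dominated too
  have keylim : ∀ s ∈ Iic (0:ℝ),
      ENNReal.ofReal (Real.exp (lam * s) * (1 + h (s + τ))) ≤ bound s := by
    intro s hs
    have hs0 : s ≤ 0 := hs
    have hh := hpos (s + τ)
    have e1 : Real.exp (lam * s) ≤ Real.exp (2 * C) * Real.exp (c₁ * s) := by
      rw [← Real.exp_add]
      apply Real.exp_le_exp.mpr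
      nlinarith [mul_le_mul_of_nonpos_right hc₁lam hs0]
    have e2 := expkey2 s hs0
    have e4 : Real.exp (2 * C) * Real.exp (c₁ * s) * h (s + τ) ≤
        Real.exp (2 * C) * Real.exp (δ * s) * h (s + τ) :=
      mul_le_mul_of_nonneg_right
        (mul_le_mul_of_nonneg_left e2 (Real.exp_nonneg _)) hh
    have e3 : Real.exp (lam * s) * (1 + h (s + τ)) ≤
        Real.exp (2 * C) * Real.exp (c₁ * s) * (1 + h (s + τ)) :=
      mul_le_mul_of_nonneg_right e1 (by linarith)
    calc ENNReal.ofReal (Real.exp (lam * s) * (1 + h (s + τ)))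
        ≤ ENNReal.ofReal (Real.exp (2 * C) * Real.exp (c₁ * s) +
            Real.exp (2 * C) * (Real.exp (δ * s) * h (s + τ))) := by
          apply ENNReal.ofReal_le_ofReal
          nlinarith
      _ = bound s := by
          rw [hbdef]
          exact ENNReal.ofReal_add (by positivity)
            (mul_nonneg (Real.exp_nonneg _) (mul_nonneg (Real.exp_nonneg _) hh))
  -- finiteness of the first piece of the bound
  have fin1 : ∫⁻ s in Iic (0:ℝ),
      ENNReal.ofReal (Real.exp (2 * C) * Real.exp (c₁ * s)) < ⊤ := by
    have hio : IntegrableOn (fun x : ℝ => Real.exp (-c₁ * x)) (Ioi (0:ℝ)) :=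
      exp_neg_integrableOn_Ioi 0 hc₁pos
    have hic : IntegrableOn (fun x : ℝ => Real.exp (-c₁ * x)) (Ici (0:ℝ)) :=
      Iff.mpr integrableOn_Ici_iff_integrableOn_Ioi hio
    have heq : ∫⁻ s in Iic (0:ℝ), ENNReal.ofReal (Real.exp (2 * C) * Real.exp (c₁ * s)) =
        ∫⁻ a in Ici (0:ℝ), ENNReal.ofReal (Real.exp (2 * C) * Real.exp (-c₁ * a)) := by
      have hmp := Measure.measurePreserving_neg (volume : Measure ℝ)
      have hpre : (Neg.neg : ℝ → ℝ) ⁻¹' Iic (0:ℝ) = Ici (0:ℝ) := by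
        ext x; simp
      have hfm : Measurable fun x : ℝ =>
          ENNReal.ofReal (Real.exp (2 * C) * Real.exp (c₁ * x)) :=
        ENNReal.measurable_ofReal.comp
          (measurable_const.mul (Real.measurable_exp.comp (measurable_const.mul measurable_id)))
      have := hmp.setLIntegral_comp_preimage (s := Iic (0:ℝ)) measurableSet_Iic hfm
      rw [hpre] at this
      rw [← this]
      apply lintegral_congr
      intro a
      congr 2
      ring_nf
    rw [heq]
    exact IntegrableOn.setLIntegral_lt_top (hic.const_mul (Real.exp (2 * C)))
  -- finiteness of the second piece of the bound
  have fin2 : ∫⁻ s in Iic (0:ℝ),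
      ENNReal.ofReal (Real.exp (2 * C) * (Real.exp (δ * s) * h (s + τ))) < ⊤ := by
    set K := Real.exp (2 * C) * Real.exp (-(δ * τ)) with hK
    have hgm : Measurable fun u : ℝ => ENNReal.ofReal (Real.exp (δ * u) * h u) :=
      ENNReal.measurable_ofReal.comp
        ((Real.measurable_exp.comp (measurable_const.mul measurable_id)).mul hmeas)
    have heq : ∫⁻ s in Iic (0:ℝ),
        ENNReal.ofReal (Real.exp (2 * C) * (Real.exp (δ * s) * h (s + τ))) =
        ENNReal.ofReal K * ∫⁻ u in Iic τ, ENNReal.ofReal (Real.exp (δ * u) * h u) := by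
      have hmp := measurePreserving_add_right (volume : Measure ℝ) τ
      have hpre : (· + τ : ℝ → ℝ) ⁻¹' Iic τ = Iic (0:ℝ) := by
        ext x; simp
      have htrans := hmp.setLIntegral_comp_preimage (s := Iic τ) measurableSet_Iic hgm
      rw [hpre] at htrans
      calc ∫⁻ s in Iic (0:ℝ),
            ENNReal.ofReal (Real.exp (2 * C) * (Real.exp (δ * s) * h (s + τ)))
          = ∫⁻ s in Iic (0:ℝ),
            ENNReal.ofReal K * ENNReal.ofReal (Real.exp (δ * (s + τ)) * h (s + τ)) := by
            apply lintegral_congr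
            intro s
            rw [← ENNReal.ofReal_mul (by rw [hK]; positivity)]
            congr 1
            rw [hK]
            have e5 : Real.exp (2 * C) * Real.exp (-(δ * τ)) *
                (Real.exp (δ * (s + τ)) * h (s + τ)) =
                Real.exp (2 * C + -(δ * τ) + δ * (s + τ)) * h (s + τ) := by
              rw [Real.exp_add, Real.exp_add]; ring
            rw [e5, show 2 * C + -(δ * τ) + δ * (s + τ) = 2 * C + δ * s by ring,
              Real.exp_add]
            ring
        _ = ENNReal.ofReal K *
            ∫⁻ s in Iic (0:ℝ), ENNReal.ofReal (Real.exp (δ * (s + τ)) * h (s + τ)) :=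
            lintegral_const_mul _ (hgm.comp (measurable_add_const τ))
        _ = ENNReal.ofReal K * ∫⁻ u in Iic τ, ENNReal.ofReal (Real.exp (δ * u) * h u) := by
            rw [htrans]
    rw [heq]
    exact ENNReal.mul_lt_top ENNReal.ofReal_lt_top (hint τ)
  have hfin : ∫⁻ s in Iic (0:ℝ), bound s ≠ ⊤ := by
    rw [hbdef]
    rw [lintegral_add_left (by
      exact ENNReal.measurable_ofReal.comp
        ((measurable_const.mul (Real.measurable_exp.comp (measurable_const.mul measurable_id)))))]
    exact (ENNReal.add_lt_top.mpr ⟨fin1, fin2⟩).ne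
  -- measurability of the family
  have hFmeas : ∀ α : ℝ, Measurable fun s : ℝ =>
      ENNReal.ofReal (Real.exp (lam * s) * Real.exp (-2 * α * ω s) * (1 + h (s + τ))) := by
    intro α
    apply ENNReal.measurable_ofReal.comp
    exact ((Real.measurable_exp.comp (measurable_const.mul measurable_id)).mul
      (Real.measurable_exp.comp (measurable_const.mul hω.measurable))).mul
      (measurable_const.add hm1)
  -- dominated convergence
  have main : Tendsto (fun α : ℝ =>
      ∫⁻ s in Iic (0:ℝ),
        ENNReal.ofReal (Real.exp (lam * s) * Real.exp (-2 * α * ω s) * (1 + h (s + τ))))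
      (𝓝[>] 0)
      (𝓝 (∫⁻ s in Iic (0:ℝ), ENNReal.ofReal (Real.exp (lam * s) * (1 + h (s + τ))))) := by
    apply tendsto_lintegral_filter_of_dominated_convergence bound
    · exact Eventually.of_forall hFmeas
    · have hIoc : Set.Ioc (0:ℝ) 1 ∈ 𝓝[>] (0:ℝ) :=
        Ioc_mem_nhdsGT_of_mem ⟨le_refl 0, zero_lt_one⟩
      filter_upwards [hIoc] with α hα
      rw [ae_restrict_iff' measurableSet_Iic]
      exact Eventually.of_forall fun s hs => key α hα s hs
    · exact hfin
    · apply Eventually.of_forall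
      intro s
      have hcont : Continuous fun α : ℝ =>
          Real.exp (lam * s) * Real.exp (-2 * α * ω s) * (1 + h (s + τ)) := by
        apply Continuous.mul _ continuous_const
        exact continuous_const.mul
          (Real.continuous_exp.comp ((continuous_const.mul continuous_id).mul continuous_const))
      have h0 : Real.exp (lam * s) * Real.exp (-2 * (0:ℝ) * ω s) * (1 + h (s + τ)) =
          Real.exp (lam * s) * (1 + h (s + τ)) := by
        norm_num
      have := (ENNReal.continuous_ofReal.tendsto _).comp (hcont.tendsto 0)
      rw [h0] at this
      exact this.mono_left nhdsWithin_le_nhds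
  refine ⟨main, ?_⟩
  intro c₀ _
  have hLfin : (∫⁻ s in Iic (0:ℝ),
      ENNReal.ofReal (Real.exp (lam * s) * (1 + h (s + τ)))) ≠ ⊤ :=
    ((setLIntegral_mono hboundmeas keylim).trans_lt (lt_top_iff_ne_top.mpr hfin)).ne
  have h2 : Tendsto (fun α : ℝ =>
      (∫⁻ s in Iic (0:ℝ),
        ENNReal.ofReal
          (Real.exp (lam * s) * Real.exp (-2 * α * ω s) * (1 + h (s + τ)))).toReal)
      (𝓝[>] 0)
      (𝓝 (∫⁻ s in Iic (0:ℝ),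
        ENNReal.ofReal (Real.exp (lam * s) * (1 + h (s + τ)))).toReal) :=
    (ENNReal.tendsto_toReal hLfin).comp main
  have h3 := ((Real.continuous_sqrt.tendsto _).comp h2).const_mul c₀
  exact h3.limsup_eq
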